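/- (Smoothing of a piecewise polynomial with a jump.) Let ℓ ≥ 0 be an integer, h > 0, x₀ ∈ (0,h), and let q₁, q₂ be real polynomials of degree at most ℓ. Define g : [0,h] → ℝ by g = q₁ on [0,x₀] and g = q₂ on (x₀,h], and set ε^{(k)} = q₂^{(k)}(x₀) − q₁^{(k)}(x₀) for k = 0,…,ℓ. Define the polynomial p(x) = (ε^{(ℓ)}/h) x^{ℓ+1}/(ℓ+1)! + Σ_{k=0}^{ℓ} q₁^{(k)}(0) x^k / k!. Then the (ℓ+1)st derivative of p is the constant ε^{(ℓ)}/h, and for every x ∈ [0,h] with x ≠ x₀ one has |p(x) − g(x)| ≤ 2 Σ_{k=0}^{ℓ} |ε^{(k)}| h^k. -/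

import Mathlib

open MeasureTheory Real Set Polynomial

private lemma poly_iteratedDeriv (n : ℕ) : ∀ (P : Polynomial ℝ) (x : ℝ),
    iteratedDeriv n (fun y => P.eval y) x = ((Polynomial.derivative (R := ℝ))^[n] P).eval x := by
  induction n with
  | zero => intro P x; simp
  | succ n ih =>
    intro P x
    rw [iteratedDeriv_succ']
    have : deriv (fun y => P.eval y) = fun y => (Polynomial.derivative P).eval y := by
      funext y; exact Polynomial.deriv (𝕜 := ℝ) (p := P)
    rw [this, ih, Function.iterate_succ_apply]

private lemma taylor_sum (ℓ : ℕ) (q : Polynomial ℝ) (hq : q.natDegree ≤ ℓ) (a x : ℝ) :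
    q.eval x = ∑ k ∈ Finset.range (ℓ + 1),
      ((Polynomial.derivative (R := ℝ))^[k] q).eval a * (x - a) ^ k / (Nat.factorial k : ℝ) := by
  conv_lhs => rw [← Polynomial.taylor_eval_sub a q x]
  rw [Polynomial.eval_eq_sum_range' (lt_of_le_of_lt ((Polynomial.natDegree_taylor q a).le.trans hq)
    (Nat.lt_succ_self ℓ))]
  refine Finset.sum_congr rfl fun k _ => ?_
  rw [Polynomial.taylor_coeff]
  have h1 : ((Polynomial.derivative (R := ℝ))^[k] q).eval a
      = (Nat.factorial k : ℝ) * (Polynomial.hasseDeriv k q).eval a := by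
    rw [← Polynomial.factorial_smul_hasseDeriv]
    simp [Polynomial.eval_smul, nsmul_eq_mul]
  rw [h1]
  have : (Nat.factorial k : ℝ) ≠ 0 := Nat.cast_ne_zero.2 (Nat.factorial_ne_zero k)
  field_simp

theorem smoothing_piecewise_polynomial
    (ℓ : ℕ) (h x₀ : ℝ) (hh : 0 < h) (hx₀ : x₀ ∈ Set.Ioo (0:ℝ) h)
    (q₁ q₂ : Polynomial ℝ) (hq₁ : q₁.natDegree ≤ ℓ) (hq₂ : q₂.natDegree ≤ ℓ)
    (ε : ℕ → ℝ)
    (hε : ∀ k, ε k =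
      ((Polynomial.derivative (R := ℝ))^[k] q₂).eval x₀ -
      ((Polynomial.derivative (R := ℝ))^[k] q₁).eval x₀)
    (p : ℝ → ℝ)
    (hp : ∀ x, p x = (ε ℓ / h) * x ^ (ℓ + 1) / (Nat.factorial (ℓ + 1) : ℝ) +
      ∑ k ∈ Finset.range (ℓ + 1),
        ((Polynomial.derivative (R := ℝ))^[k] q₁).eval 0 * x ^ k / (Nat.factorial k : ℝ))
    (g : ℝ → ℝ)
    (hg : ∀ x, g x = if x ≤ x₀ then q₁.eval x else q₂.eval x) :
    (∀ x : ℝ, iteratedDeriv (ℓ + 1) p x = ε ℓ / h) ∧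
    (∀ x ∈ Set.Icc (0:ℝ) h, x ≠ x₀ →
      |p x - g x| ≤ 2 * ∑ k ∈ Finset.range (ℓ + 1), |ε k| * h ^ k) := by
  set c : ℝ := ε ℓ / h with hc
  set f : ℝ := (Nat.factorial (ℓ + 1) : ℝ) with hf
  have hfne : f ≠ 0 := Nat.cast_ne_zero.2 (Nat.factorial_ne_zero _)
  set Q : Polynomial ℝ := ∑ k ∈ Finset.range (ℓ + 1),
      Polynomial.C (((Polynomial.derivative (R := ℝ))^[k] q₁).eval 0 / (Nat.factorial k : ℝ))
        * Polynomial.X ^ k with hQ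
  set P : Polynomial ℝ := Polynomial.C (c / f) * Polynomial.X ^ (ℓ + 1) + Q with hP
  have hpP : p = fun x => P.eval x := by
    funext x
    rw [hp]
    simp only [hP, hQ, Polynomial.eval_add, Polynomial.eval_mul, Polynomial.eval_C,
      Polynomial.eval_pow, Polynomial.eval_X, Polynomial.eval_finset_sum]
    congr 1
    · ring
    · exact Finset.sum_congr rfl fun k _ => by ring
  have hQdeg : Q.natDegree ≤ ℓ := by
    refine Polynomial.natDegree_sum_le_of_forall_le _ _ fun k hk => ?_
    refine le_trans (Polynomial.natDegree_C_mul_le _ _) ?_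
    simpa [Polynomial.natDegree_X_pow] using Nat.lt_succ_iff.1 (Finset.mem_range.1 hk)
  constructor
  · intro x
    rw [hpP, poly_iteratedDeriv]
    have hadd : (Polynomial.derivative (R := ℝ))^[ℓ+1] P
        = (Polynomial.derivative (R := ℝ))^[ℓ+1] (Polynomial.C (c / f) * Polynomial.X ^ (ℓ + 1))
          + (Polynomial.derivative (R := ℝ))^[ℓ+1] Q := by
      rw [hP]; exact iterate_map_add _ _ _ _
    rw [hadd, Polynomial.iterate_derivative_eq_zero (lt_of_le_of_lt hQdeg (Nat.lt_succ_self ℓ)),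
      Polynomial.iterate_derivative_C_mul, Polynomial.iterate_derivative_X_pow_eq_natCast_mul,
      Nat.descFactorial_self, Nat.sub_self, pow_zero]
    simp [hf, hc]
    field_simp
  · intro x hx hxney
    have hq1x : q₁.eval x = ∑ k ∈ Finset.range (ℓ + 1),
        ((Polynomial.derivative (R := ℝ))^[k] q₁).eval 0 * (x - 0) ^ k / (Nat.factorial k : ℝ) :=
      taylor_sum ℓ q₁ hq₁ 0 x
    have hpq : p x - q₁.eval x = c * x ^ (ℓ + 1) / f := by
      rw [hp, hq1x]; simp
    have hx0 : 0 ≤ x := hx.1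
    have hxh : x ≤ h := hx.2
    have hS0 : ∀ k ∈ Finset.range (ℓ + 1), 0 ≤ |ε k| * h ^ k := fun k _ =>
      mul_nonneg (abs_nonneg _) (pow_nonneg hh.le _)
    have hSnn : 0 ≤ ∑ k ∈ Finset.range (ℓ + 1), |ε k| * h ^ k := Finset.sum_nonneg hS0
    -- bound on the smoothing term
    have hsm : |c * x ^ (ℓ + 1) / f| ≤ ∑ k ∈ Finset.range (ℓ + 1), |ε k| * h ^ k := by
      have h1 : |c * x ^ (ℓ + 1) / f| ≤ |ε ℓ| * h ^ ℓ := by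
        rw [hc, hf, abs_div, abs_mul, abs_div]
        have hxp : |x ^ (ℓ + 1)| ≤ h ^ (ℓ + 1) := by
          rw [abs_pow, abs_of_nonneg hx0]
          exact pow_le_pow_left₀ hx0 hxh _
        have hfp : (1:ℝ) ≤ |(Nat.factorial (ℓ + 1) : ℝ)| := by
          rw [abs_of_nonneg (by positivity)]
          exact_mod_cast Nat.one_le_iff_ne_zero.2 (Nat.factorial_ne_zero _)
        calc |ε ℓ| / |h| * |x ^ (ℓ + 1)| / |(Nat.factorial (ℓ + 1) : ℝ)|
            ≤ |ε ℓ| / |h| * |x ^ (ℓ + 1)| / 1 := by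
              apply div_le_div_of_nonneg_left ?_ one_pos hfp <;> positivity
          _ = |ε ℓ| / |h| * |x ^ (ℓ + 1)| := by ring
          _ ≤ |ε ℓ| / |h| * h ^ (ℓ + 1) := by
              apply mul_le_mul_of_nonneg_left hxp (by positivity)
          _ = |ε ℓ| * h ^ ℓ := by
              rw [abs_of_pos hh]; field_simp; ring
      refine le_trans h1 ?_
      exact Finset.single_le_sum hS0 (Finset.self_mem_range_succ ℓ)
    -- Taylor expansion of the difference q₂ - q₁ at x₀
    have hdiff : q₂.eval x - q₁.eval x = ∑ k ∈ Finset.range (ℓ + 1),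
        ε k * (x - x₀) ^ k / (Nat.factorial k : ℝ) := by
      have hdeg : (q₂ - q₁).natDegree ≤ ℓ :=
        le_trans (Polynomial.natDegree_sub_le _ _) (max_le hq₂ hq₁)
      have := taylor_sum ℓ (q₂ - q₁) hdeg x₀ x
      rw [Polynomial.eval_sub] at this
      rw [this]
      refine Finset.sum_congr rfl fun k _ => ?_
      congr 1
      rw [hε k]
      congr 1
      induction k with
      | zero => simp
      | succ n ih =>
        simp only [Function.iterate_succ_apply']
        rw [show (Polynomial.derivative (R := ℝ))^[n] (q₂ - q₁)
          = (Polynomial.derivative (R := ℝ))^[n] q₂ - (Polynomial.derivative (R := ℝ))^[n] q₁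
          from iterate_map_sub _ _ _ _]
        simp
    have hdbd : |q₂.eval x - q₁.eval x| ≤ ∑ k ∈ Finset.range (ℓ + 1), |ε k| * h ^ k := by
      rw [hdiff]
      refine le_trans (Finset.abs_sum_le_sum_abs _ _) (Finset.sum_le_sum fun k _ => ?_)
      rw [abs_div, abs_mul]
      have hxx : |x - x₀| ≤ h := by
        rw [abs_le]
        constructor <;> [linarith [hx₀.2]; linarith [hx₀.1]]
      have h2 : |(x - x₀) ^ k| ≤ h ^ k := by
        rw [abs_pow]; exact pow_le_pow_left₀ (abs_nonneg _) hxx _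
      have h3 : (1:ℝ) ≤ |(Nat.factorial k : ℝ)| := by
        rw [abs_of_nonneg (by positivity)]
        exact_mod_cast Nat.one_le_iff_ne_zero.2 (Nat.factorial_ne_zero _)
      calc |ε k| * |(x - x₀) ^ k| / |(Nat.factorial k : ℝ)|
          ≤ |ε k| * |(x - x₀) ^ k| / 1 := by
            apply div_le_div_of_nonneg_left ?_ one_pos h3 <;> positivity
        _ = |ε k| * |(x - x₀) ^ k| := by ring
        _ ≤ |ε k| * h ^ k := mul_le_mul_of_nonneg_left h2 (abs_nonneg _)
    rw [hg]
    by_cases hcase : x ≤ x₀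
    · rw [if_pos hcase]
      calc |p x - q₁.eval x| = |c * x ^ (ℓ + 1) / f| := by rw [hpq]
        _ ≤ ∑ k ∈ Finset.range (ℓ + 1), |ε k| * h ^ k := hsm
        _ ≤ 2 * ∑ k ∈ Finset.range (ℓ + 1), |ε k| * h ^ k := by linarith
    · rw [if_neg hcase]
      have : p x - q₂.eval x = c * x ^ (ℓ + 1) / f - (q₂.eval x - q₁.eval x) := by
        rw [← hpq]; ring
      rw [this]
      calc |c * x ^ (ℓ + 1) / f - (q₂.eval x - q₁.eval x)|
          ≤ |c * x ^ (ℓ + 1) / f| + |q₂.eval x - q₁.eval x| := abs_sub _ _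
        _ ≤ 2 * ∑ k ∈ Finset.range (ℓ + 1), |ε k| * h ^ k := by linarith
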